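/- Let V be a normed real vector space, δ : V × V → V any function, and T : L¹([0,1];ℝ) → V a continuous linear map satisfying T(γ(f,g)) = δ(T(f), T(g)) for all f, g ∈ L¹([0,1];ℝ). Then T = 0 if and only if T(𝟙) = 0. -/

import Mathlib

open MeasureTheory
open scoped symmDiff

/-- Lebesgue measure restricted to `[0,1]`. -/
noncomputable def μ01 : Measure ℝ := volume.restrict (Set.Icc 0 1)

/-- The space `L¹([0,1]; ℝ)`. -/
abbrev L1 : Type := Lp ℝ 1 μ01

/-- `γ : L1 → L1 → L1` is the juxtaposition operation: `γ f g` agrees a.e. with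
`x ↦ f (2x)` on `[0, 1/2)` and with `x ↦ g (2x − 1)` on `[1/2, 1]`. -/
def IsJux (γ : L1 → L1 → L1) : Prop :=
  ∀ f g : L1,
    (∀ᵐ x ∂μ01, x ∈ Set.Ico (0 : ℝ) (1 / 2) → γ f g x = f (2 * x)) ∧
    (∀ᵐ x ∂μ01, x ∈ Set.Icc (1 / 2 : ℝ) 1 → γ f g x = g (2 * x - 1))

/-- `one : L1` is the class of the constant function `1`. -/
def IsOne (one : L1) : Prop := (one : ℝ → ℝ) =ᵐ[μ01] fun _ => (1 : ℝ)

lemma μ01_def : μ01 = volume.restrict (Set.Icc 0 1) := rfl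

instance : IsFiniteMeasure μ01 :=
  ⟨by rw [μ01_def, Measure.restrict_apply_univ, Real.volume_Icc]; norm_num⟩

lemma ae_mem_Icc : ∀ᵐ x ∂μ01, x ∈ Set.Icc (0:ℝ) 1 := by
  rw [μ01_def]; exact ae_restrict_mem measurableSet_Icc

lemma ae_ne_one : ∀ᵐ x ∂μ01, x ≠ (1:ℝ) := by
  have h : μ01 {(1:ℝ)} = 0 := by
    refine le_antisymm (le_trans (Measure.restrict_le_self _) ?_) zero_le
    simp [Real.volume_singleton]
  have := measure_mono_null (fun x (hx : x ∈ {y : ℝ | ¬ y ≠ (1:ℝ)}) => by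
    simpa using hx) h
  exact ae_iff.mpr this

/-- Pullback of null sets under affine maps. -/
lemma null_pull (a b : ℝ) (ha : a ≠ 0) {N : Set ℝ} (hN : volume N = 0) :
    volume ((fun x => a * x + b) ⁻¹' N) = 0 := by
  have h1 : ((fun x => a * x + b) ⁻¹' N) = (fun x => a * x) ⁻¹' ((fun y => b + y) ⁻¹' N) := by
    ext x; simp [add_comm]
  rw [h1]
  have h2 : volume ((fun y => b + y) ⁻¹' N) = 0 := by
    rw [measure_preimage_add]; exact hN
  rw [Real.volume_preimage_mul_left ha, h2, mul_zero]

/-- Composition with an affine map preserving `[0,1]`-a.e. equality. -/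
lemma ae_comp (a b : ℝ) (ha : a ≠ 0) {S : Set ℝ} (hS : ∀ x ∈ S, a * x + b ∈ Set.Icc (0:ℝ) 1)
    (f : L1) {F : ℝ → ℝ} (hf : (f : ℝ → ℝ) =ᵐ[μ01] F) :
    ∀ᵐ x ∂μ01, x ∈ S → f (a * x + b) = F (a * x + b) := by
  have h1 : ∀ᵐ y ∂volume, y ∈ Set.Icc (0:ℝ) 1 → f y = F y :=
    (ae_restrict_iff' measurableSet_Icc).mp hf
  have hN : volume {y : ℝ | ¬ (y ∈ Set.Icc (0:ℝ) 1 → f y = F y)} = 0 := ae_iff.mp h1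
  have h2 : ∀ᵐ x ∂volume, x ∈ S → f (a * x + b) = F (a * x + b) := by
    rw [ae_iff]
    refine measure_mono_null ?_ (null_pull a b ha hN)
    intro x hx
    simp only [Set.mem_setOf_eq, Classical.not_imp] at hx
    intro h
    exact hx.2 (h (hS x hx.1))
  exact ae_restrict_of_ae h2

/-- The a.e. description of `γ f g` in terms of representatives. -/
lemma gamma_ae {γ : L1 → L1 → L1} (hγ : IsJux γ) (f g : L1) {F G : ℝ → ℝ}
    (hF : (f : ℝ → ℝ) =ᵐ[μ01] F) (hG : (g : ℝ → ℝ) =ᵐ[μ01] G) :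
    (γ f g : ℝ → ℝ) =ᵐ[μ01] fun x => if x < 1/2 then F (2*x) else G (2*x - 1) := by
  obtain ⟨h1, h2⟩ := hγ f g
  have c1 : ∀ᵐ x ∂μ01, x ∈ Set.Ico (0:ℝ) (1/2) → f (2 * x) = F (2 * x) := by
    have := ae_comp 2 0 two_ne_zero (S := Set.Ico (0:ℝ) (1/2))
      (fun x hx => ⟨by linarith [hx.1], by linarith [hx.2]⟩) f hF
    filter_upwards [this] with x hx hxS
    simpa using hx hxS
  have c2 : ∀ᵐ x ∂μ01, x ∈ Set.Icc (1/2:ℝ) 1 → g (2 * x - 1) = G (2 * x - 1) := by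
    have := ae_comp 2 (-1) two_ne_zero (S := Set.Icc (1/2:ℝ) 1)
      (fun x hx => ⟨by linarith [hx.1], by linarith [hx.2]⟩) g hG
    filter_upwards [this] with x hx hxS
    have := hx hxS
    rw [show (2:ℝ) * x + -1 = 2 * x - 1 by ring] at this
    exact this
  filter_upwards [h1, h2, c1, c2, ae_mem_Icc] with x H1 H2 C1 C2 hx
  by_cases hx2 : x < 1/2
  · have hm : x ∈ Set.Ico (0:ℝ) (1/2) := ⟨hx.1, hx2⟩
    rw [if_pos hx2, H1 hm, C1 hm]
  · have hm : x ∈ Set.Icc (1/2:ℝ) 1 := ⟨not_lt.mp hx2, hx.2⟩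
    rw [if_neg hx2, H2 hm, C2 hm]

/-- Indicator of a measurable set as an element of `L1`. -/
noncomputable def EI (s : Set ℝ) (hs : MeasurableSet s) : L1 :=
  indicatorConstLp 1 hs (measure_ne_top μ01 s) (1:ℝ)

/-- Indicator of `Ico a b` as an element of `L1`. -/
noncomputable def eIco (a b : ℝ) : L1 := EI (Set.Ico a b) measurableSet_Ico

lemma EI_coeFn (s : Set ℝ) (hs : MeasurableSet s) :
    (EI s hs : ℝ → ℝ) =ᵐ[μ01] s.indicator (fun _ => (1:ℝ)) :=
  indicatorConstLp_coeFn

lemma EI_congr {s t : Set ℝ} (hs : MeasurableSet s) (ht : MeasurableSet t)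
    (h : s =ᵐ[μ01] t) : EI s hs = EI t ht :=
  (indicatorConstLp_inj hs _ ht _ one_ne_zero).mpr h

lemma EI_empty : EI ∅ MeasurableSet.empty = 0 := by
  rw [EI]
  exact indicatorConstLp_empty

lemma eIco_empty {a b : ℝ} (h : b ≤ a) : eIco a b = 0 := by
  rw [eIco]
  have : Set.Ico a b = (∅ : Set ℝ) := Set.Ico_eq_empty (by exact fun hlt => absurd h (not_le.mpr hlt))
  rw [← EI_empty]
  exact EI_congr _ _ (by rw [this]; exact Filter.EventuallyEq.rfl)

lemma EI_union {s t : Set ℝ} (hs : MeasurableSet s) (ht : MeasurableSet t)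
    (hst : Disjoint s t) : EI (s ∪ t) (hs.union ht) = EI s hs + EI t ht := by
  rw [EI, EI, EI]
  exact indicatorConstLp_disjoint_union hs ht _ _ hst (1:ℝ)

lemma eIco_add {a b c : ℝ} (hab : a ≤ b) (hbc : b ≤ c) :
    eIco a c = eIco a b + eIco b c := by
  rw [eIco, eIco, eIco, ← EI_union measurableSet_Ico measurableSet_Ico
    (Set.Ico_disjoint_Ico.mpr ((min_le_left b c).trans (le_max_right a b)))]
  exact EI_congr _ _ (by rw [Set.Ico_union_Ico_eq_Ico hab hbc]; exact Filter.EventuallyEq.rfl)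

lemma dist_EI (s t : Set ℝ) (hs : MeasurableSet s) (ht : MeasurableSet t) :
    dist (EI s hs) (EI t ht) = (μ01 (s ∆ t)).toReal := by
  rw [EI, EI, dist_indicatorConstLp_eq_norm, norm_indicatorConstLp one_ne_zero ENNReal.one_ne_top]
  simp
  rfl

lemma EI_Ico01 {one : L1} (hone : IsOne one) :
    eIco 0 1 = one := by
  refine Lp.ext ((EI_coeFn _ _).trans ?_)
  refine Filter.EventuallyEq.trans ?_ hone.symm
  filter_upwards [ae_mem_Icc, ae_ne_one] with x hx hne
  have : x ∈ Set.Ico (0:ℝ) 1 := ⟨hx.1, lt_of_le_of_ne hx.2 hne⟩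
  simp [Set.indicator_of_mem this]

lemma EI_univ {one : L1} (hone : IsOne one) :
    EI Set.univ MeasurableSet.univ = one := by
  refine Lp.ext ((EI_coeFn _ _).trans ?_)
  refine Filter.EventuallyEq.trans ?_ hone.symm
  filter_upwards with x
  simp

/-- `γ` applied to a left indicator. -/
lemma key_left {γ : L1 → L1 → L1} (hγ : IsJux γ) (a b : ℝ) (hb : b ≤ 1) :
    γ (eIco a b) 0 = eIco (a/2) (b/2) := by
  have h0 : ((0 : L1) : ℝ → ℝ) =ᵐ[μ01] (fun _ => (0:ℝ)) := Lp.coeFn_zero _ _ _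
  have h := gamma_ae hγ (eIco a b) 0 (EI_coeFn _ _) h0
  refine Lp.ext (h.trans ?_)
  refine Filter.EventuallyEq.trans ?_ (EI_coeFn _ _).symm
  filter_upwards with x
  by_cases hx : x < 1/2
  · rw [if_pos hx]
    simp only [Set.indicator_apply, Set.mem_Ico]
    have : (a ≤ 2*x ∧ 2*x < b) ↔ (a/2 ≤ x ∧ x < b/2) := by constructor <;> (intro ⟨u,v⟩; constructor <;> linarith)
    simp [this]
  · rw [if_neg hx]
    have : x ∉ Set.Ico (a/2) (b/2) := by
      intro ⟨u, v⟩
      exact hx (lt_of_lt_of_le v (by linarith))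
    simp [Set.indicator_of_notMem this]

/-- `γ` applied to a right indicator. -/
lemma key_right {γ : L1 → L1 → L1} (hγ : IsJux γ) (a b : ℝ) (ha : 0 ≤ a) :
    γ 0 (eIco a b) = eIco ((a+1)/2) ((b+1)/2) := by
  have h0 : ((0 : L1) : ℝ → ℝ) =ᵐ[μ01] (fun _ => (0:ℝ)) := Lp.coeFn_zero _ _ _
  have h := gamma_ae hγ 0 (eIco a b) h0 (EI_coeFn _ _)
  refine Lp.ext (h.trans ?_)
  refine Filter.EventuallyEq.trans ?_ (EI_coeFn _ _).symm
  filter_upwards with x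
  by_cases hx : x < 1/2
  · rw [if_pos hx]
    have : x ∉ Set.Ico ((a+1)/2) ((b+1)/2) := by
      intro ⟨u, v⟩
      exact absurd hx (not_lt.mpr (by linarith))
    simp [Set.indicator_of_notMem this]
  · rw [if_neg hx]
    simp only [Set.indicator_apply, Set.mem_Ico]
    have : (a ≤ 2*x - 1 ∧ 2*x - 1 < b) ↔ ((a+1)/2 ≤ x ∧ x < (b+1)/2) := by
      constructor <;> (intro ⟨u,v⟩; constructor <;> linarith)
    simp [this]

lemma Ico_symmDiff_subset (a b c d : ℝ) :
    (Set.Ico a b) ∆ (Set.Ico c d) ⊆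
      Set.Ico (min a c) (max a c) ∪ Set.Ico (min b d) (max b d) := by
  intro x hx
  rw [Set.mem_symmDiff] at hx
  simp only [Set.mem_Ico, Set.mem_union] at *
  rcases hx with ⟨⟨h1, h2⟩, h3⟩ | ⟨⟨h1, h2⟩, h3⟩ <;>
    rw [not_and_or, not_le, not_lt] at h3
  · rcases h3 with h3 | h3
    · exact Or.inl ⟨(min_le_left a c).trans h1, lt_of_lt_of_le h3 (le_max_right a c)⟩
    · exact Or.inr ⟨(min_le_right b d).trans h3, lt_of_lt_of_le h2 (le_max_left b d)⟩
  · rcases h3 with h3 | h3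
    · exact Or.inl ⟨(min_le_right a c).trans h1, lt_of_lt_of_le h3 (le_max_left a c)⟩
    · exact Or.inr ⟨(min_le_left b d).trans h3, lt_of_lt_of_le h2 (le_max_right b d)⟩

lemma dist_eIco_le (a b c d : ℝ) :
    dist (eIco a b) (eIco c d) ≤ |a - c| + |b - d| := by
  rw [eIco, eIco, dist_EI]
  have hsub := Ico_symmDiff_subset a b c d
  have h1 : μ01 ((Set.Ico a b) ∆ (Set.Ico c d)) ≤
      ENNReal.ofReal (|a - c| + |b - d|) := by
    calc μ01 ((Set.Ico a b) ∆ (Set.Ico c d))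
        ≤ volume ((Set.Ico a b) ∆ (Set.Ico c d)) := Measure.restrict_le_self _
      _ ≤ volume (Set.Ico (min a c) (max a c) ∪ Set.Ico (min b d) (max b d)) :=
          measure_mono hsub
      _ ≤ volume (Set.Ico (min a c) (max a c)) + volume (Set.Ico (min b d) (max b d)) :=
          measure_union_le _ _
      _ = ENNReal.ofReal (max a c - min a c) + ENNReal.ofReal (max b d - min b d) := by
          rw [Real.volume_Ico, Real.volume_Ico]
      _ = ENNReal.ofReal (|a - c| + |b - d|) := by
          rw [max_sub_min_eq_abs, max_sub_min_eq_abs, abs_sub_comm c a, abs_sub_comm d b,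
            ENNReal.ofReal_add (abs_nonneg _) (abs_nonneg _)]
  exact ENNReal.toReal_le_of_le_ofReal (by positivity) h1

lemma eIco_clamp (a b : ℝ) :
    eIco a b = eIco (min (max a 0) 1) (min (max b 0) 1) := by
  refine EI_congr _ _ (Filter.eventuallyEq_set.mpr ?_)
  filter_upwards [ae_mem_Icc, ae_ne_one] with x hx hne
  have hx0 : (0:ℝ) ≤ x := hx.1
  have hx1 : x < 1 := lt_of_le_of_ne hx.2 hne
  simp only [Set.mem_Ico]
  constructor
  · rintro ⟨u, v⟩
    exact ⟨(min_le_left _ _).trans (max_le u hx0),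
      lt_min (lt_of_lt_of_le v (le_max_left b 0)) hx1⟩
  · rintro ⟨u, v⟩
    constructor
    · rcases min_cases (max a 0) 1 with ⟨he, _⟩ | ⟨he, _⟩
      · rw [he] at u
        exact (le_max_left a 0).trans u
      · rw [he] at u; linarith
    · have := lt_min_iff.mp v
      rcases max_cases b 0 with ⟨he, _⟩ | ⟨he, _⟩
      · rw [he] at this; exact this.1
      · rw [he] at this; linarith [this.1]

set_option maxHeartbeats 1000000

/-- a continuous linear map `T` out of `L¹([0,1];ℝ)` intertwining
the juxtaposition `γ` with some operation `δ` is zero iff `T 𝟙 = 0`. -/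
theorem stmt_7 {V : Type*} [NormedAddCommGroup V] [NormedSpace ℝ V]
    (δ : V × V → V)
    (γ : L1 → L1 → L1) (hγ : IsJux γ)
    (one : L1) (hone : IsOne one)
    (T : L1 →L[ℝ] V)
    (hT : ∀ f g : L1, T (γ f g) = δ (T f, T g)) :
    T = 0 ↔ T one = 0 := by
  constructor
  · intro h; rw [h]; rfl
  intro h1
  -- `γ one one = one`, so `δ (0,0) = 0`.
  have hγone : γ one one = one := by
    refine Lp.ext ((gamma_ae hγ one one hone hone).trans ?_)
    refine Filter.EventuallyEq.trans ?_ hone.symm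
    filter_upwards with x
    by_cases h : x < 1/2 <;> simp [h]
  have hδ00 : δ (0, 0) = 0 := by
    have h := hT one one
    rw [hγone, h1] at h
    exact h.symm
  have hIco01 : T (eIco 0 1) = 0 := by rw [EI_Ico01 hone]; exact h1
  -- dyadic intervals
  have dyad : ∀ n k : ℕ, k < 2 ^ n →
      T (eIco ((k : ℝ) / 2 ^ n) (((k : ℝ) + 1) / 2 ^ n)) = 0 := by
    intro n
    induction n with
    | zero =>
      intro k hk
      interval_cases k
      simpa using hIco01
    | succ n IH =>
      intro k hk
      have h2n : (0:ℝ) < 2 ^ n := by positivity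
      by_cases hkn : k < 2 ^ n
      · have hb : ((k : ℝ) + 1) / 2 ^ n ≤ 1 := by
          rw [div_le_one h2n]
          exact_mod_cast Nat.succ_le_of_lt hkn
        have hkey := key_left hγ ((k : ℝ) / 2 ^ n) (((k : ℝ) + 1) / 2 ^ n) hb
        have e1 : ((k : ℝ) / 2 ^ n) / 2 = (k : ℝ) / 2 ^ (n + 1) := by
          rw [pow_succ]; ring
        have e2 : (((k : ℝ) + 1) / 2 ^ n) / 2 = ((k : ℝ) + 1) / 2 ^ (n + 1) := by
          rw [pow_succ]; ring
        rw [← e1, ← e2, ← hkey, hT, IH k hkn, map_zero, hδ00]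
      · push_neg at hkn
        set j := k - 2 ^ n with hj
        have hjn : j < 2 ^ n := by
          rw [hj]
          rw [pow_succ] at hk
          omega
        have hcast : (k : ℝ) = (j : ℝ) + 2 ^ n := by
          have : j + 2 ^ n = k := Nat.sub_add_cancel hkn
          push_cast [← this]
          ring
        have ha : (0:ℝ) ≤ (j : ℝ) / 2 ^ n := by positivity
        have hkey := key_right hγ ((j : ℝ) / 2 ^ n) (((j : ℝ) + 1) / 2 ^ n) ha
        have e1 : ((j : ℝ) / 2 ^ n + 1) / 2 = (k : ℝ) / 2 ^ (n + 1) := by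
          rw [hcast, pow_succ]
          field_simp
          try ring
        have e2 : (((j : ℝ) + 1) / 2 ^ n + 1) / 2 = ((k : ℝ) + 1) / 2 ^ (n + 1) := by
          rw [hcast, pow_succ]
          field_simp
          try ring
        rw [← e1, ← e2, ← hkey, hT, IH j hjn, map_zero, hδ00]
  -- spans of dyadic intervals
  have span : ∀ n m k : ℕ, m ≤ 2 ^ n →
      T (eIco ((k : ℝ) / 2 ^ n) ((m : ℝ) / 2 ^ n)) = 0 := by
    intro n m
    induction m with
    | zero =>
      intro k _
      have : eIco ((k : ℝ) / 2 ^ n) (((0:ℕ) : ℝ) / 2 ^ n) = 0 := by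
        apply eIco_empty
        simp
        try positivity
      rw [this, map_zero]
    | succ m IH =>
      intro k hm
      have h2n : (0:ℝ) < 2 ^ n := by positivity
      by_cases hk : m + 1 ≤ k
      · have : eIco ((k : ℝ) / 2 ^ n) ((((m:ℕ)+1 : ℕ) : ℝ) / 2 ^ n) = 0 := by
          apply eIco_empty
          gcongr <;> exact_mod_cast hk
        push_cast at this ⊢
        rw [this, map_zero]
      · push_neg at hk
        have hkm : (k : ℝ) / 2 ^ n ≤ (m : ℝ) / 2 ^ n := by
          gcongr
          exact_mod_cast Nat.lt_succ_iff.mp hk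
        have hmm : (m : ℝ) / 2 ^ n ≤ ((m : ℝ) + 1) / 2 ^ n := by
          gcongr
          linarith
        push_cast
        rw [eIco_add hkm hmm, map_add, IH k (le_of_lt (Nat.lt_of_succ_le hm)),
          dyad n m (Nat.lt_of_succ_le hm), add_zero]
  -- arbitrary subintervals of [0,1]
  have approx : ∀ a b : ℝ, 0 ≤ a → a ≤ 1 → 0 ≤ b → b ≤ 1 → T (eIco a b) = 0 := by
    intro a b ha0 ha1 hb0 hb1
    have key : ∀ n : ℕ, ‖T (eIco a b)‖ ≤ ‖T‖ * (2 * (1/2) ^ n) := by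
      intro n
      have h2n : (0:ℝ) < 2 ^ n := by positivity
      set k := ⌊2 ^ n * a⌋₊ with hk
      set m := ⌊2 ^ n * b⌋₊ with hm
      have hm2 : m ≤ 2 ^ n := by
        have h' : (m : ℝ) ≤ ((2 ^ n : ℕ) : ℝ) := by
          push_cast
          exact (Nat.floor_le (by positivity)).trans (by nlinarith)
        exact_mod_cast h'
      have hspan := span n m k hm2
      have hka : |a - (k : ℝ) / 2 ^ n| ≤ 1 / 2 ^ n := by
        have hfl : (k : ℝ) ≤ 2 ^ n * a := Nat.floor_le (by positivity)
        have hfu : 2 ^ n * a < (k : ℝ) + 1 := Nat.lt_floor_add_one _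
        have l1 : (k : ℝ) / 2 ^ n ≤ a := by rw [div_le_iff₀ h2n]; nlinarith
        have l2 : a ≤ ((k : ℝ) + 1) / 2 ^ n := by rw [le_div_iff₀ h2n]; nlinarith
        have l3 : ((k : ℝ) + 1) / 2 ^ n = (k : ℝ) / 2 ^ n + 1 / 2 ^ n := by ring
        have l4 : (0:ℝ) < 1 / 2 ^ n := by positivity
        rw [abs_le]
        constructor <;> [linarith; linarith]
      have hmb : |b - (m : ℝ) / 2 ^ n| ≤ 1 / 2 ^ n := by
        have hfl : (m : ℝ) ≤ 2 ^ n * b := Nat.floor_le (by positivity)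
        have hfu : 2 ^ n * b < (m : ℝ) + 1 := Nat.lt_floor_add_one _
        have l1 : (m : ℝ) / 2 ^ n ≤ b := by rw [div_le_iff₀ h2n]; nlinarith
        have l2 : b ≤ ((m : ℝ) + 1) / 2 ^ n := by rw [le_div_iff₀ h2n]; nlinarith
        have l3 : ((m : ℝ) + 1) / 2 ^ n = (m : ℝ) / 2 ^ n + 1 / 2 ^ n := by ring
        have l4 : (0:ℝ) < 1 / 2 ^ n := by positivity
        rw [abs_le]
        constructor <;> [linarith; linarith]
      calc ‖T (eIco a b)‖ = ‖T (eIco a b) - T (eIco ((k : ℝ) / 2 ^ n) ((m : ℝ) / 2 ^ n))‖ := by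
            rw [hspan, sub_zero]
        _ = ‖T (eIco a b - eIco ((k : ℝ) / 2 ^ n) ((m : ℝ) / 2 ^ n))‖ := by rw [map_sub]
        _ ≤ ‖T‖ * ‖eIco a b - eIco ((k : ℝ) / 2 ^ n) ((m : ℝ) / 2 ^ n)‖ := T.le_opNorm _
        _ = ‖T‖ * dist (eIco a b) (eIco ((k : ℝ) / 2 ^ n) ((m : ℝ) / 2 ^ n)) := by
            rw [dist_eq_norm]
        _ ≤ ‖T‖ * (|a - (k : ℝ) / 2 ^ n| + |b - (m : ℝ) / 2 ^ n|) := by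
            apply mul_le_mul_of_nonneg_left (dist_eIco_le _ _ _ _) (norm_nonneg _)
        _ ≤ ‖T‖ * (2 * (1/2) ^ n) := by
            apply mul_le_mul_of_nonneg_left ?_ (norm_nonneg _)
            have : ((1:ℝ)/2) ^ n = 1 / 2 ^ n := by rw [div_pow, one_pow]
            rw [this]
            linarith
    have htend : Filter.Tendsto (fun n : ℕ => ‖T‖ * (2 * (1/2) ^ n)) Filter.atTop (nhds 0) := by
      have h0 := tendsto_pow_atTop_nhds_zero_of_lt_one (by norm_num : (0:ℝ) ≤ 1/2)
        (by norm_num : (1:ℝ)/2 < 1)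
      have := (h0.const_mul (2:ℝ)).const_mul ‖T‖
      simpa using this
    have : ‖T (eIco a b)‖ ≤ 0 := ge_of_tendsto htend (Filter.Eventually.of_forall key)
    exact norm_le_zero_iff.mp this
  -- all intervals
  have allIco : ∀ a b : ℝ, T (eIco a b) = 0 := by
    intro a b
    rw [eIco_clamp]
    apply approx
    · exact le_min (le_max_right a 0) zero_le_one
    · exact min_le_right _ _
    · exact le_min (le_max_right b 0) zero_le_one
    · exact min_le_right _ _
  -- all measurable sets, via the π-system of `Ico` intervals
  have hAll : ∀ s : Set ℝ, MeasurableSet s → ∀ hs : MeasurableSet s, T (EI s hs) = 0 := by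
    have borel_eq : (inferInstance : MeasurableSpace ℝ) =
        MeasurableSpace.generateFrom {S : Set ℝ | ∃ l u : ℝ, l < u ∧ Set.Ico l u = S} :=
      BorelSpace.measurable_eq.trans (borel_eq_generateFrom_Ico ℝ)
    refine MeasurableSpace.induction_on_inter (C := fun s _ => ∀ hs : MeasurableSet s, T (EI s hs) = 0)
      borel_eq (isPiSystem_Ico (id : ℝ → ℝ) id) ?_ ?_ ?_ ?_
    · intro hs
      have : EI ∅ hs = 0 := EI_empty
      rw [this, map_zero]
    · rintro t ⟨l, u, hlt, rfl⟩ hs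
      exact allIco l u
    · intro t ht hC hsc
      have e : EI Set.univ MeasurableSet.univ = EI t ht + EI tᶜ ht.compl := by
        rw [← EI_union ht ht.compl disjoint_compl_right]
        exact EI_congr _ _ (by rw [Set.union_compl_self]; exact Filter.EventuallyEq.rfl)
      have h0 : T (EI Set.univ MeasurableSet.univ) = 0 := by
        rw [EI_univ hone]; exact h1
      rw [e, map_add, hC ht] at h0
      simpa using h0
    · intro f hdisj hmeas hC
      set A : ℕ → Set ℝ := fun n => ⋃ i ∈ Finset.range n, f i with hA
      have hAmeas : ∀ n, MeasurableSet (A n) := fun n =>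
        MeasurableSet.biUnion (Finset.range n).countable_toSet (fun i _ => hmeas i)
      have hTA : ∀ n, T (EI (A n) (hAmeas n)) = 0 := by
        intro n
        induction n with
        | zero =>
          have : EI (A 0) (hAmeas 0) = 0 := by
            rw [show EI (A 0) (hAmeas 0) = EI ∅ MeasurableSet.empty from
              EI_congr _ _ (by simp [hA])]
            exact EI_empty
          rw [this, map_zero]
        | succ n IH =>
          have hstep : A (n+1) = A n ∪ f n := by
            rw [hA]
            simp [Finset.range_add_one, Set.iUnion_union_distrib]
            ext x
            simp [or_comm]
          have hdis : Disjoint (A n) (f n) := by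
            rw [hA]
            simp only [Set.disjoint_left, Set.mem_iUnion]
            rintro x ⟨i, hi, hx⟩ hx'
            simp only [Finset.mem_range] at hi
            exact Set.disjoint_left.mp (hdisj (Nat.ne_of_lt hi)) hx hx'
          have e : EI (A (n+1)) (hAmeas (n+1)) = EI (A n) (hAmeas n) + EI (f n) (hmeas n) := by
            rw [show EI (A (n+1)) (hAmeas (n+1)) =
              EI (A n ∪ f n) ((hAmeas n).union (hmeas n)) from EI_congr _ _ (by rw [hstep]; exact Filter.EventuallyEq.rfl)]
            exact EI_union _ _ hdis
          rw [e, map_add, IH, hC n, add_zero]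
      -- limit
      set U : Set ℝ := ⋃ i, f i with hU
      have hUmeas : MeasurableSet U := MeasurableSet.iUnion hmeas
      have hsub : ∀ n, A n ⊆ U := by
        intro n x hx
        simp only [hA, Set.mem_iUnion] at hx
        obtain ⟨i, _, hx⟩ := hx
        exact Set.mem_iUnion.mpr ⟨i, hx⟩
      have hiUnionA : (⋃ n, A n) = U := by
        apply Set.Subset.antisymm
        · exact Set.iUnion_subset hsub
        · intro x hx
          obtain ⟨i, hx⟩ := Set.mem_iUnion.mp hx
          exact Set.mem_iUnion.mpr ⟨i + 1, by
            simp only [hA, Set.mem_iUnion]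
            exact ⟨i, Finset.mem_range.mpr (Nat.lt_succ_self i), hx⟩⟩
      have hsd : Filter.Tendsto (fun n => μ01 (A n ∆ U)) Filter.atTop (nhds 0) := by
        have hrw : ∀ n, A n ∆ U = U \ A n := fun n => symmDiff_of_le (hsub n)
        have hanti : Antitone (fun n => U \ A n) := by
          intro i j hij
          apply Set.diff_subset_diff_right
          intro x hx
          simp only [hA, Set.mem_iUnion] at hx ⊢
          obtain ⟨l, hl, hx⟩ := hx
          exact ⟨l, Finset.mem_range.mpr (lt_of_lt_of_le (Finset.mem_range.mp hl) hij), hx⟩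
        have hinter : (⋂ n, U \ A n) = ∅ := by
          rw [← Set.diff_iUnion, hiUnionA, Set.diff_self]
        have htend := tendsto_measure_iInter_atTop
          (μ := μ01) (s := fun n => U \ A n)
          (fun n => (hUmeas.diff (hAmeas n)).nullMeasurableSet)
          hanti ⟨0, measure_ne_top _ _⟩
        rw [hinter] at htend
        simp only [measure_empty] at htend
        simp_rw [hrw]
        exact htend
      have hlim : Filter.Tendsto (fun n => EI (A n) (hAmeas n)) Filter.atTop
          (nhds (EI U hUmeas)) := by
        simp only [EI]
        exact tendsto_indicatorConstLp_set ENNReal.one_ne_top hsd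
      intro hs
      have hcomp := ((T.continuous.tendsto (EI U hUmeas)).comp hlim)
      have hconst : (fun n => T (EI (A n) (hAmeas n))) = fun _ => (0 : V) := funext hTA
      rw [show ((⇑T ∘ fun n => EI (A n) (hAmeas n)) = fun n => T (EI (A n) (hAmeas n))) from rfl,
        hconst] at hcomp
      exact tendsto_nhds_unique hcomp tendsto_const_nhds
  -- conclude by density of simple functions
  have hall : ∀ f : L1, T f = 0 := by
    refine Lp.induction (p := 1) (μ := μ01) ENNReal.one_ne_top (fun f : L1 => T f = 0)
      ?_ ?_ ?_
    · intro c s hs hμs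
      rw [Lp.simpleFunc.coe_indicatorConst]
      have hscale : (indicatorConstLp 1 hs hμs.ne c : L1) = c • EI s hs := by
        refine Lp.ext ?_
        filter_upwards [indicatorConstLp_coeFn (μ := μ01) (p := 1) (hs := hs)
          (hμs := hμs.ne) (c := c), Lp.coeFn_smul c (EI s hs), EI_coeFn s hs] with x hx1 hx2 hx3
        rw [hx1, hx2, Pi.smul_apply, hx3]
        by_cases hxs : x ∈ s <;> simp [hxs]
      rw [hscale, T.map_smul, hAll s hs hs, smul_zero]
    · intro f g hf hg hdisj hPf hPg
      rw [map_add, hPf, hPg, add_zero]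
    · exact isClosed_eq T.continuous continuous_const
  exact ContinuousLinearMap.ext fun f => by rw [hall f]; rfl
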